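/- Assume condition (∗). If there exist a well-founded relation ⟨A, R⟩ and a function θ : {X_i : i ∈ I} → A monotone with respect to monomorphisms such that for each a in the range of θ there is no ω*-sequence in I^θ_a, then X = ⋃_{i∈I} X_i is reversible. In particular, X is reversible whenever all the sets I^θ_a, a in the range of θ, are finite. -/
import Mathlib


universe u v w

section Defs

variable {α : Type*} {β : Type*}

/-- `f` is a homomorphism from `⟨α, r⟩` to `⟨β, s⟩`. -/
def IsHom (r : α → α → Prop) (s : β → β → Prop) (f : α → β) : Prop :=
  ∀ x y, r x y → s (f x) (f y)

/-- A condensation is a bijective homomorphism. -/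
def IsCond (r : α → α → Prop) (s : β → β → Prop) (f : α → β) : Prop :=
  Function.Bijective f ∧ IsHom r s f

/-- A monomorphism is an injective homomorphism. -/
def IsMono (r : α → α → Prop) (s : β → β → Prop) (f : α → β) : Prop :=
  Function.Injective f ∧ IsHom r s f

/-- An isomorphism of binary structures. -/
def IsIso (r : α → α → Prop) (s : β → β → Prop) (f : α → β) : Prop :=
  Function.Bijective f ∧ ∀ x y, r x y ↔ s (f x) (f y)

/-- A binary structure is reversible iff every self-condensation is an automorphism. -/
def Reversible (r : α → α → Prop) : Prop :=
  ∀ f : α → α, IsCond r r f → IsIso r r f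

/-- A binary structure is connected iff it has exactly one component: it is nonempty and
the least equivalence relation containing `r` relates any two points. -/
def Connected (r : α → α → Prop) : Prop :=
  Nonempty α ∧ ∀ x y, Relation.EqvGen r x y

/-- The relation of the disjoint union of the structures `⟨X i, R i⟩`. -/
def unionRel {I : Type*} {X : I → Type*} (R : ∀ i, X i → X i → Prop) :
    (Σ i, X i) → (Σ i, X i) → Prop :=
  fun a b => ∃ h : a.1 = b.1, R b.1 (h ▸ a.2) b.2

end Defs

section Aux

lemma eqvGen_fst {I : Type u} {X : I → Type v} {R : ∀ i, X i → X i → Prop}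
    {a b : Σ i, X i} (h : Relation.EqvGen (unionRel R) a b) : a.1 = b.1 := by
  induction h with
  | rel a b h => exact h.1
  | refl a => rfl
  | symm a b _ ih => exact ih.symm
  | trans a b c _ _ ih1 ih2 => exact ih1.trans ih2

lemma eqvGen_map {α : Type*} {β : Type*} {r : α → α → Prop} {s : β → β → Prop} {f : α → β}
    (hf : IsHom r s f) {x y : α} (h : Relation.EqvGen r x y) :
    Relation.EqvGen s (f x) (f y) := by
  induction h with
  | rel a b h => exact Relation.EqvGen.rel _ _ (hf a b h)
  | refl a => exact Relation.EqvGen.refl _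
  | symm a b _ ih => exact Relation.EqvGen.symm _ _ ih
  | trans a b c _ _ ih1 ih2 => exact Relation.EqvGen.trans _ _ _ ih1 ih2

lemma eqvGen_lift {I : Type u} {X : I → Type v} {R : ∀ i, X i → X i → Prop}
    {i : I} {x y : X i} (h : Relation.EqvGen (R i) x y) :
    Relation.EqvGen (unionRel R) ⟨i, x⟩ ⟨i, y⟩ := by
  induction h with
  | rel a b h => exact Relation.EqvGen.rel _ _ ⟨rfl, h⟩
  | refl a => exact Relation.EqvGen.refl _
  | symm a b _ ih => exact Relation.EqvGen.symm _ _ ih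
  | trans a b c _ _ ih1 ih2 => exact Relation.EqvGen.trans _ _ _ ih1 ih2

lemma sigma_eq {I : Type u} {X : I → Type v} {j : I} (a : Σ i, X i) (h : a.1 = j) :
    a = ⟨j, cast (congrArg X h) a.2⟩ := by
  cases a; subst h; rfl

lemma mono_comp {α β γ : Type*} {r : α → α → Prop} {s : β → β → Prop} {t : γ → γ → Prop}
    (h1 : ∃ F : α → β, IsMono r s F) (h2 : ∃ G : β → γ, IsMono s t G) :
    ∃ H : α → γ, IsMono r t H := by
  obtain ⟨F, hFi, hFh⟩ := h1; obtain ⟨G, hGi, hGh⟩ := h2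
  exact ⟨G ∘ F, hGi.comp hFi, fun x y h => hGh _ _ (hFh _ _ h)⟩

lemma bij_comp {α β γ : Type*} {r : α → α → Prop} {s : β → β → Prop} {t : γ → γ → Prop}
    (h1 : ∃ F : α → β, Function.Bijective F ∧ IsHom r s F)
    (h2 : ∃ G : β → γ, Function.Bijective G ∧ IsHom s t G) :
    ∃ H : α → γ, Function.Bijective H ∧ IsHom r t H := by
  obtain ⟨F, hFi, hFh⟩ := h1; obtain ⟨G, hGi, hGh⟩ := h2
  exact ⟨G ∘ F, hGi.comp hFi, fun x y h => hGh _ _ (hFh _ _ h)⟩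

end Aux

theorem stmt8_aux {I : Type u} {X : I → Type v} (R : ∀ i, X i → X i → Prop)
    (hconn : ∀ i, Connected (R i)) (hrev : ∀ i, Reversible (R i))
    {A : Type w} {W : A → A → Prop} {θ : I → A}
    (h1 : ∀ S : Set A, S.Nonempty → ∃ a ∈ S, ∀ b ∈ S, ¬ W b a)
    (h2 : ∀ i j : I, (∃ F : X i → X j, IsMono (R i) (R j) F) → θ i = θ j ∨ W (θ i) (θ j))
    (h3 : ∀ a ∈ Set.range θ, ¬ ∃ g : ℕ → I,
        Function.Injective g ∧ (∀ k, θ (g k) = a) ∧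
        ∀ k l : ℕ, k < l → ∃ F : X (g l) → X (g k), IsMono (R (g l)) (R (g k)) F) :
    Reversible (unionRel R) := by
  intro f hf
  have hx0 : ∀ i, X i := fun i => Classical.choice (hconn i).1
  have hcomp : ∀ i (x : X i), (f ⟨i, x⟩).1 = (f ⟨i, hx0 i⟩).1 := fun i x =>
    eqvGen_fst (eqvGen_map hf.2 (eqvGen_lift ((hconn i).2 x (hx0 i))))
  obtain ⟨g, F, hfF⟩ : ∃ (g : I → I) (F : ∀ i, X i → X (g i)),
      ∀ i (x : X i), f ⟨i, x⟩ = ⟨g i, F i x⟩ :=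
    ⟨fun i => (f ⟨i, hx0 i⟩).1,
     fun i x => cast (congrArg X (hcomp i x)) (f ⟨i, x⟩).2,
     fun i x => sigma_eq _ (hcomp i x)⟩
  have hFinj : ∀ i, Function.Injective (F i) := by
    intro i x y h
    have hxy : f ⟨i, x⟩ = f ⟨i, y⟩ := by rw [hfF, hfF, h]
    have := hf.1.1 hxy
    simpa using this
  have hFhom : ∀ i (x y : X i), R i x y → R (g i) (F i x) (F i y) := by
    intro i x y h
    have h' := hf.2 ⟨i, x⟩ ⟨i, y⟩ ⟨rfl, h⟩
    rw [hfF, hfF] at h'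
    obtain ⟨e, hr⟩ := h'
    exact hr
  have hMono : ∀ i, ∃ G : X i → X (g i), IsMono (R i) (R (g i)) G :=
    fun i => ⟨F i, hFinj i, hFhom i⟩
  have hgsurj : ∀ j, ∃ i, g i = j := by
    intro j
    obtain ⟨a, ha⟩ := hf.1.2 ⟨j, hx0 j⟩
    obtain ⟨i, x⟩ := a
    rw [hfF i x] at ha
    exact ⟨i, congrArg Sigma.fst ha⟩
  -- every index is periodic under g
  have hper : ∀ i, ∃ n, 0 < n ∧ g^[n] i = i := by
    intro i
    obtain ⟨c, hc0, hgc⟩ : ∃ c : ℕ → I, c 0 = i ∧ ∀ k, g (c (k + 1)) = c k := by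
      refine ⟨fun n => Nat.rec i (fun _ p => Classical.choose (hgsurj p)) n, rfl, fun k => ?_⟩
      exact Classical.choose_spec (hgsurj _)
    have hchain : ∀ k n, ∃ Φ : X (c (k + n)) → X (c k), IsMono (R (c (k + n))) (R (c k)) Φ := by
      intro k n
      induction n with
      | zero => exact ⟨id, fun x y h => h, fun x y h => h⟩
      | succ n ih =>
        show ∃ Φ : X (c (k + n + 1)) → X (c k), IsMono (R (c (k + n + 1))) (R (c k)) Φ
        have h' := hMono (c (k + n + 1))
        rw [hgc (k + n)] at h'
        exact mono_comp h' ih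
    have hθ : ∀ k, θ (c (k + 1)) = θ (c k) ∨ W (θ (c (k + 1))) (θ (c k)) := by
      intro k
      have h' := hMono (c (k + 1))
      rw [hgc k] at h'
      exact h2 _ _ h'
    obtain ⟨a, haS, hmin⟩ := h1 (Set.range fun k => θ (c k)) ⟨θ (c 0), ⟨0, rfl⟩⟩
    obtain ⟨m, hm⟩ := haS
    have hconst : ∀ k, θ (c (m + k)) = a := by
      intro k
      induction k with
      | zero => exact hm
      | succ k ih =>
        show θ (c (m + k + 1)) = a
        rcases hθ (m + k) with h | h
        · rw [h]; exact ih
        · rw [ih] at h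
          exact absurd h (hmin _ ⟨m + k + 1, rfl⟩)
    have hseq : ∀ k l : ℕ, k < l →
        ∃ Φ : X (c (m + l)) → X (c (m + k)), IsMono (R (c (m + l))) (R (c (m + k))) Φ := by
      intro k l hkl
      have hc' := hchain (m + k) (l - k)
      rw [show m + k + (l - k) = m + l from by omega] at hc'
      exact hc'
    have hninj : ¬ Function.Injective fun k => c (m + k) := by
      intro hinj
      exact h3 a ⟨c m, hm⟩ ⟨fun k => c (m + k), hinj, hconst, hseq⟩
    obtain ⟨k, l, hkl, hne⟩ := Function.not_injective_iff.mp hninj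
    have hiter : ∀ k n, g^[n] (c (k + n)) = c k := by
      intro k n
      induction n with
      | zero => rfl
      | succ n ih =>
        show g^[n + 1] (c (k + n + 1)) = c k
        rw [Function.iterate_succ_apply, hgc (k + n)]
        exact ih
    have key : ∀ k l : ℕ, k < l → c (m + k) = c (m + l) → ∃ n, 0 < n ∧ g^[n] i = i := by
      intro k l hlt he
      refine ⟨l - k, by omega, ?_⟩
      have hfix : g^[l - k] (c (m + k)) = c (m + k) := by
        conv_lhs => rw [he]
        have h' := hiter (m + k) (l - k)
        rw [show m + k + (l - k) = m + l from by omega] at h'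
        exact h'
      have hreach : g^[m + k] (c (m + k)) = i := by
        have h' := hiter 0 (m + k)
        rw [Nat.zero_add] at h'
        exact h'.trans hc0
      rw [← hreach, ← Function.iterate_add_apply,
        show (l - k) + (m + k) = (m + k) + (l - k) from by omega,
        Function.iterate_add_apply, hfix]
    rcases Nat.lt_trichotomy k l with h | h | h
    · exact key k l h hkl
    · exact absurd h hne
    · exact key l k h hkl.symm
  have hginj : Function.Injective g := by
    intro i j hgij
    obtain ⟨n, hn, hgn⟩ := hper i
    obtain ⟨m, hm', hgm⟩ := hper j
    have hNi : g^[n * m] i = i := by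
      rw [Function.iterate_mul]; exact Function.iterate_fixed hgn m
    have hNj : g^[n * m] j = j := by
      rw [Nat.mul_comm, Function.iterate_mul]; exact Function.iterate_fixed hgm n
    obtain ⟨M, hM⟩ : ∃ M, n * m = M + 1 := ⟨n * m - 1, by have := Nat.mul_pos hn hm'; omega⟩
    have e : ∀ x, g^[n * m] x = g^[M] (g x) := fun x => by
      rw [hM, Function.iterate_succ_apply]
    calc i = g^[n * m] i := hNi.symm
      _ = g^[M] (g i) := e i
      _ = g^[M] (g j) := by rw [hgij]
      _ = g^[n * m] j := (e j).symm
      _ = j := hNj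
  have hFsurj : ∀ i, Function.Surjective (F i) := by
    intro i y
    obtain ⟨a, ha⟩ := hf.1.2 ⟨g i, y⟩
    obtain ⟨j, x⟩ := a
    rw [hfF j x] at ha
    have hji : j = i := hginj (congrArg Sigma.fst ha)
    subst hji
    injection ha with e1 e2
    exact ⟨x, e2⟩
  have hB : ∀ i, ∃ G : X i → X (g i), Function.Bijective G ∧ IsHom (R i) (R (g i)) G :=
    fun i => ⟨F i, ⟨hFinj i, hFsurj i⟩, hFhom i⟩
  have hBiter : ∀ n (j : I), ∃ G : X j → X (g^[n] j),
      Function.Bijective G ∧ IsHom (R j) (R (g^[n] j)) G := by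
    intro n
    induction n with
    | zero =>
      intro j
      exact ⟨id, Function.bijective_id, fun x y h => h⟩
    | succ n ih =>
      intro j
      rw [Function.iterate_succ_apply']
      exact bij_comp (ih j) (hB (g^[n] j))
  have hback : ∀ i, ∃ G : X (g i) → X i, Function.Bijective G ∧ IsHom (R (g i)) (R i) G := by
    intro i
    obtain ⟨n, hn, hgn⟩ := hper i
    obtain ⟨M, hM⟩ : ∃ M, n = M + 1 := ⟨n - 1, by omega⟩
    have h' := hBiter M (g i)
    have e : g^[M] (g i) = i := by
      rw [← Function.iterate_succ_apply, show M.succ = n from hM.symm]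
      exact hgn
    rw [e] at h'
    exact h'
  have hFrefl : ∀ i (x y : X i), R (g i) (F i x) (F i y) → R i x y := by
    intro i x y h
    obtain ⟨G, hGb, hGh⟩ := hback i
    have hcond : IsCond (R i) (R i) (G ∘ F i) :=
      ⟨hGb.comp ⟨hFinj i, hFsurj i⟩, fun u v hr => hGh _ _ (hFhom i u v hr)⟩
    have hiso := hrev i _ hcond
    exact (hiso.2 x y).mpr (hGh _ _ h)
  refine ⟨hf.1, fun a b => ⟨fun h => hf.2 a b h, fun h => ?_⟩⟩
  obtain ⟨i, x⟩ := a
  obtain ⟨j, y⟩ := b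
  rw [hfF i x, hfF j y] at h
  obtain ⟨hgij, hr⟩ := h
  have hij : i = j := hginj hgij
  subst hij
  exact ⟨rfl, hFrefl i x y hr⟩



/-- **Theorem (Statement 8).** Under condition (∗) — `⟨X i, R i⟩`, `i ∈ I`, pairwise disjoint
(realized by a sigma type), connected and reversible binary structures — if there are a
well-founded relation `⟨A, W⟩` (every non-empty subset of `A` has a `W`-minimal element) and a
function `θ` on the components, monotone with respect to monomorphisms w.r.t. the
reflexivization of `W`, such that for each `a` in the range of `θ` there is no ω*-sequence in
`I^θ_a = {i : θ i = a}`, then the union is reversible; in particular, it is reversible whenever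
all the sets `I^θ_a` are finite. -/
theorem stmt8 {I : Type u} {X : I → Type v} (R : ∀ i, X i → X i → Prop)
    (hconn : ∀ i, Connected (R i)) (hrev : ∀ i, Reversible (R i)) :
    ((∃ (A : Type w) (W : A → A → Prop) (θ : I → A),
        (∀ S : Set A, S.Nonempty → ∃ a ∈ S, ∀ b ∈ S, ¬ W b a) ∧
        (∀ i j : I, (∃ F : X i → X j, IsMono (R i) (R j) F) → θ i = θ j ∨ W (θ i) (θ j)) ∧
        (∀ a ∈ Set.range θ, ¬ ∃ g : ℕ → I,
          Function.Injective g ∧ (∀ k, θ (g k) = a) ∧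
          ∀ k l : ℕ, k < l → ∃ F : X (g l) → X (g k), IsMono (R (g l)) (R (g k)) F)) →
      Reversible (unionRel R)) ∧
    ((∃ (A : Type w) (W : A → A → Prop) (θ : I → A),
        (∀ S : Set A, S.Nonempty → ∃ a ∈ S, ∀ b ∈ S, ¬ W b a) ∧
        (∀ i j : I, (∃ F : X i → X j, IsMono (R i) (R j) F) → θ i = θ j ∨ W (θ i) (θ j)) ∧
        (∀ a ∈ Set.range θ, {i : I | θ i = a}.Finite)) →
      Reversible (unionRel R)) := by
  constructor
  · rintro ⟨A, W, θ, h1, h2, h3⟩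
    exact stmt8_aux R hconn hrev h1 h2 h3
  · rintro ⟨A, W, θ, h1, h2, h3⟩
    refine stmt8_aux R hconn hrev h1 h2 ?_
    rintro a ha ⟨gs, hinj, hconst, -⟩
    exact Set.infinite_range_of_injective hinj
      ((h3 a ha).subset (by rintro _ ⟨k, rfl⟩; exact hconst k))
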